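/- Let δ > 0 and x ∈ B_δ(0) ⊂ ℝ^m. Then (∂/∂t) ∫_{B_δ(0)} p(x,y;t) dy ≤ −(m ω_m δ^m / (2t(4πt)^{m/2})) e^{−δ²/t} for all t > 0, where ω_m = |B_1(0)|. -/

import Mathlib

open Real MeasureTheory Metric Set intervalIntegral

noncomputable section

namespace BallHeat

variable {m : ℕ}

/-- exit length of the ray from `0` in direction `θ` out of `ball (-x) δ`. -/
def rho (x : EuclideanSpace ℝ (Fin m)) (δ : ℝ) (θ : sphere (0 : EuclideanSpace ℝ (Fin m)) 1) : ℝ :=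
  Real.sqrt (δ ^ 2 - ‖x‖ ^ 2 + (inner ℝ x (θ : EuclideanSpace ℝ (Fin m)) : ℝ) ^ 2)
    - (inner ℝ x (θ : EuclideanSpace ℝ (Fin m)) : ℝ)

variable {x : EuclideanSpace ℝ (Fin m)} {δ : ℝ}

lemma inner_sq_le (θ : sphere (0 : EuclideanSpace ℝ (Fin m)) 1) :
    (inner ℝ x (θ : EuclideanSpace ℝ (Fin m)) : ℝ) ^ 2 ≤ ‖x‖ ^ 2 := by
  have h1 : |(inner ℝ x (θ : EuclideanSpace ℝ (Fin m)) : ℝ)| ≤ ‖x‖ * ‖(θ : EuclideanSpace ℝ (Fin m))‖ :=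
    abs_real_inner_le_norm _ _
  have h2 : ‖(θ : EuclideanSpace ℝ (Fin m))‖ = 1 := by
    simpa using mem_sphere_zero_iff_norm.1 θ.2
  rw [h2, mul_one] at h1
  calc (inner ℝ x (θ : EuclideanSpace ℝ (Fin m)) : ℝ) ^ 2
      = |(inner ℝ x (θ : EuclideanSpace ℝ (Fin m)) : ℝ)| ^ 2 := (sq_abs _).symm
    _ ≤ ‖x‖ ^ 2 := by nlinarith [abs_nonneg (inner ℝ x (θ : EuclideanSpace ℝ (Fin m)) : ℝ)]

lemma rho_pos (hδ : 0 < δ) (hx : ‖x‖ < δ) (θ : sphere (0 : EuclideanSpace ℝ (Fin m)) 1) :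
    0 < rho x δ θ := by
  set a : ℝ := (inner ℝ x (θ : EuclideanSpace ℝ (Fin m)) : ℝ) with ha
  have hD : a ^ 2 < δ ^ 2 - ‖x‖ ^ 2 + a ^ 2 := by nlinarith [norm_nonneg x]
  have h1 : |a| < Real.sqrt (δ ^ 2 - ‖x‖ ^ 2 + a ^ 2) := by
    rw [← Real.sqrt_sq_eq_abs]
    exact Real.sqrt_lt_sqrt (sq_nonneg a) hD
  have := (abs_lt.1 h1).2
  have := (abs_lt.1 h1).1
  simp only [rho, ← ha]
  nlinarith [abs_nonneg a, le_abs_self a]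

lemma rho_le (hδ : 0 < δ) (hx : ‖x‖ < δ) (θ : sphere (0 : EuclideanSpace ℝ (Fin m)) 1) :
    rho x δ θ ≤ 2 * δ := by
  set a : ℝ := (inner ℝ x (θ : EuclideanSpace ℝ (Fin m)) : ℝ) with ha
  have h0 : a ^ 2 ≤ ‖x‖ ^ 2 := inner_sq_le θ
  have h1 : Real.sqrt (δ ^ 2 - ‖x‖ ^ 2 + a ^ 2) ≤ δ := by
    calc Real.sqrt (δ ^ 2 - ‖x‖ ^ 2 + a ^ 2) ≤ Real.sqrt (δ ^ 2) :=
          Real.sqrt_le_sqrt (by nlinarith)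
      _ = δ := Real.sqrt_sq hδ.le
  have h2 : -a ≤ δ := by
    have : |a| ≤ ‖x‖ := by nlinarith [abs_nonneg a, sq_abs a, norm_nonneg x]
    nlinarith [neg_abs_le a]
  simp only [rho, ← ha]
  linarith

lemma smul_mem_ball_iff (hδ : 0 < δ) (hx : ‖x‖ < δ)
    (θ : sphere (0 : EuclideanSpace ℝ (Fin m)) 1) {r : ℝ} (hr : 0 < r) :
    r • (θ : EuclideanSpace ℝ (Fin m)) ∈ ball (-x) δ ↔ r < rho x δ θ := by
  set a : ℝ := (inner ℝ x (θ : EuclideanSpace ℝ (Fin m)) : ℝ) with ha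
  have hθ : ‖(θ : EuclideanSpace ℝ (Fin m))‖ = 1 := by
    simpa using mem_sphere_zero_iff_norm.1 θ.2
  have h0 : a ^ 2 ≤ ‖x‖ ^ 2 := inner_sq_le θ
  set D : ℝ := δ ^ 2 - ‖x‖ ^ 2 + a ^ 2 with hD
  have hDpos : a ^ 2 < D := by rw [hD]; nlinarith [norm_nonneg x]
  have hq : Real.sqrt D ^ 2 = D := Real.sq_sqrt ((sq_nonneg a).trans_lt hDpos).le
  have hqa : |a| < Real.sqrt D := by
    rw [← Real.sqrt_sq_eq_abs]; exact Real.sqrt_lt_sqrt (sq_nonneg a) hDpos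
  have hinner : (inner ℝ (r • (θ : EuclideanSpace ℝ (Fin m))) x : ℝ) = r * a := by
    rw [real_inner_smul_left, real_inner_comm, ← ha]
  have hnr : ‖r • (θ : EuclideanSpace ℝ (Fin m))‖ = r := by
    rw [norm_smul, hθ, mul_one, Real.norm_eq_abs, abs_of_pos hr]
  have hnorm : ‖r • (θ : EuclideanSpace ℝ (Fin m)) + x‖ ^ 2 = r ^ 2 + 2 * (r * a) + ‖x‖ ^ 2 := by
    rw [norm_add_sq_real, hinner, hnr]
  have hmem : r • (θ : EuclideanSpace ℝ (Fin m)) ∈ ball (-x) δ ↔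
      ‖r • (θ : EuclideanSpace ℝ (Fin m)) + x‖ < δ := by
    rw [mem_ball, dist_eq_norm, sub_neg_eq_add]
  rw [hmem]
  constructor
  · intro h
    have hsq : r ^ 2 + 2 * (r * a) + ‖x‖ ^ 2 < δ ^ 2 := by
      rw [← hnorm]; nlinarith [norm_nonneg (r • (θ : EuclideanSpace ℝ (Fin m)) + x)]
    have h2 : (r + a) ^ 2 < Real.sqrt D ^ 2 := by rw [hq]; nlinarith
    have h3 : r + a < Real.sqrt D := by
      nlinarith [Real.sqrt_nonneg D, sq_nonneg (r + a - Real.sqrt D)]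
    simp only [rho, ← ha, ← hD]
    linarith
  · intro h
    have h1 : r + a < Real.sqrt D := by simp only [rho, ← ha, ← hD] at h; linarith
    have h2 : -(Real.sqrt D) < r + a := by
      nlinarith [neg_abs_le a]
    have h3 : (r + a) ^ 2 < D := by nlinarith
    have h4 : ‖r • (θ : EuclideanSpace ℝ (Fin m)) + x‖ ^ 2 < δ ^ 2 := by rw [hnorm]; nlinarith
    nlinarith [norm_nonneg (r • (θ : EuclideanSpace ℝ (Fin m)) + x)]

lemma rho_continuous (x : EuclideanSpace ℝ (Fin m)) (δ : ℝ) :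
    Continuous (rho x δ) := by
  have h : Continuous fun θ : sphere (0 : EuclideanSpace ℝ (Fin m)) 1 =>
      (inner ℝ x (θ : EuclideanSpace ℝ (Fin m)) : ℝ) :=
    (continuous_const.inner continuous_subtype_val)
  exact (Real.continuous_sqrt.comp (by fun_prop)).sub h

lemma polar_rep (hm : 1 ≤ m) (hδ : 0 < δ) (hx : ‖x‖ < δ) (φ : ℝ → ℝ) (hφ : Continuous φ) :
    ∫ z, Set.indicator (ball (-x) δ) (fun z => φ ‖z‖) z ∂(volume : Measure (EuclideanSpace ℝ (Fin m)))
      = ∫ θ : sphere (0 : EuclideanSpace ℝ (Fin m)) 1,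
          (∫ r in (0:ℝ)..(rho x δ θ), φ r * r ^ (m - 1))
          ∂(volume : Measure (EuclideanSpace ℝ (Fin m))).toSphere := by
  haveI : Nontrivial (EuclideanSpace ℝ (Fin m)) :=
    Module.nontrivial_of_finrank_pos (R := ℝ) (by rw [finrank_euclideanSpace_fin]; omega)
  have hrank : Module.finrank ℝ (EuclideanSpace ℝ (Fin m)) = m := finrank_euclideanSpace_fin
  have MP := (volume : Measure (EuclideanSpace ℝ (Fin m))).measurePreserving_homeomorphUnitSphereProd
  rw [hrank] at MP
  set f : EuclideanSpace ℝ (Fin m) → ℝ :=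
    Set.indicator (ball (-x) δ) (fun z => φ ‖z‖) with hf
  set g : (sphere (0 : EuclideanSpace ℝ (Fin m)) 1 × Ioi (0:ℝ)) → ℝ :=
    fun p => f ((p.2 : ℝ) • (p.1 : EuclideanSpace ℝ (Fin m))) with hg
  have hfmeas : Measurable f :=
    ((hφ.comp continuous_norm).measurable).indicator measurableSet_ball
  -- integrability of f
  obtain ⟨C, hC⟩ := (isCompact_Icc (a := (0:ℝ)) (b := ‖x‖ + δ)).exists_bound_of_continuousOn
    hφ.continuousOn
  have hfint : Integrable f (volume : Measure (EuclideanSpace ℝ (Fin m))) := by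
    refine Integrable.mono' (g := fun z => Set.indicator (ball (-x) δ) (fun _ => C) z)
      ?_ hfmeas.aestronglyMeasurable ?_
    · rw [integrable_indicator_iff measurableSet_ball]
      exact integrableOn_const measure_ball_lt_top.ne
    · refine Filter.Eventually.of_forall fun z => ?_
      by_cases hz : z ∈ ball (-x) δ
      · simp only [hf, Set.indicator_of_mem hz]
        refine hC ‖z‖ ⟨norm_nonneg z, ?_⟩
        have : ‖z + x‖ < δ := by
          rw [mem_ball, dist_eq_norm, sub_neg_eq_add] at hz; exact hz
        calc ‖z‖ = ‖z + x + -x‖ := by rw [add_neg_cancel_right]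
          _ ≤ ‖z + x‖ + ‖x‖ := by simpa using norm_add_le (z + x) (-x)
          _ ≤ ‖x‖ + δ := by linarith
      · simp only [hf, Set.indicator_of_notMem hz]
        simp
  -- step 1 : pass to the product measure
  have step1 : ∫ z, f z ∂(volume : Measure (EuclideanSpace ℝ (Fin m)))
      = ∫ p, g p ∂(((volume : Measure (EuclideanSpace ℝ (Fin m))).toSphere).prod
          (Measure.volumeIoiPow (m - 1))) := by
    calc ∫ z, f z ∂(volume : Measure (EuclideanSpace ℝ (Fin m)))
        = ∫ z in ({(0 : EuclideanSpace ℝ (Fin m))}ᶜ), f z ∂volume := by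
          rw [restrict_compl_singleton]
      _ = ∫ z : ({(0 : EuclideanSpace ℝ (Fin m))}ᶜ : Set (EuclideanSpace ℝ (Fin m))), f z
            ∂(Measure.comap Subtype.val volume) :=
          (integral_subtype_comap (measurableSet_singleton _).compl f).symm
      _ = ∫ p, g p ∂(((volume : Measure (EuclideanSpace ℝ (Fin m))).toSphere).prod
            (Measure.volumeIoiPow (m - 1))) := by
          rw [← MP.integral_comp (Homeomorph.measurableEmbedding _) g]
          refine integral_congr_ae (Filter.Eventually.of_forall fun z => ?_)
          have h : g (homeomorphUnitSphereProd _ z) = f z.1 := by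
            simp only [hg, homeomorphUnitSphereProd_apply_snd_coe,
              homeomorphUnitSphereProd_apply_fst_coe]
            rw [smul_inv_smul₀ (norm_ne_zero_iff.2 z.2)]
          exact h.symm
  -- integrability of g
  have hgint : Integrable g
      ((((volume : Measure (EuclideanSpace ℝ (Fin m))).toSphere)).prod
        (Measure.volumeIoiPow (m - 1))) := by
    rw [← MP.integrable_comp_emb (Homeomorph.measurableEmbedding _)]
    have : (g ∘ (homeomorphUnitSphereProd (EuclideanSpace ℝ (Fin m))))
        = fun z : ({0}ᶜ : Set (EuclideanSpace ℝ (Fin m))) => f z.1 := by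
      funext z
      show g (homeomorphUnitSphereProd _ z) = f z.1
      simp only [hg, homeomorphUnitSphereProd_apply_snd_coe,
        homeomorphUnitSphereProd_apply_fst_coe]
      rw [smul_inv_smul₀ (norm_ne_zero_iff.2 z.2)]
    rw [this]
    have h2 : Integrable f ((volume : Measure (EuclideanSpace ℝ (Fin m))).restrict {(0:EuclideanSpace ℝ (Fin m))}ᶜ) :=
      hfint.integrableOn
    rw [← map_comap_subtype_coe (measurableSet_singleton _).compl] at h2
    exact ((MeasurableEmbedding.subtype_coe
      (measurableSet_singleton (0 : EuclideanSpace ℝ (Fin m))).compl).integrable_map_iff).1 h2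
  -- step 3 : Fubini
  rw [step1, MeasureTheory.integral_prod g hgint]
  -- step 4 : the inner integral
  refine integral_congr_ae (Filter.Eventually.of_forall fun θ => ?_)
  show ∫ r : Ioi (0:ℝ), g (θ, r) ∂(Measure.volumeIoiPow (m-1)) = _
  simp only [Measure.volumeIoiPow, ENNReal.ofReal]
  rw [integral_withDensity_eq_integral_smul
    ((measurable_subtype_coe.pow_const _).real_toNNReal)]
  rw [integral_subtype_comap measurableSet_Ioi
    (fun a : ℝ => Real.toNNReal (a ^ (m-1)) • f (a • (θ : EuclideanSpace ℝ (Fin m))))]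
  have heq : EqOn (fun a : ℝ => Real.toNNReal (a ^ (m-1)) • f (a • (θ : EuclideanSpace ℝ (Fin m))))
      (Set.indicator (Ioo (0:ℝ) (rho x δ θ)) (fun r => φ r * r ^ (m-1))) (Ioi (0:ℝ)) := by
    intro r hr
    have hr0 : (0:ℝ) < r := hr
    have hsm : Real.toNNReal (r ^ (m-1)) • f (r • (θ : EuclideanSpace ℝ (Fin m)))
        = r ^ (m-1) * f (r • (θ : EuclideanSpace ℝ (Fin m))) := by
      rw [NNReal.smul_def, Real.coe_toNNReal _ (pow_nonneg hr0.le _), smul_eq_mul]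
    have hnr : ‖r • (θ : EuclideanSpace ℝ (Fin m))‖ = r := by
      have hθ : ‖(θ : EuclideanSpace ℝ (Fin m))‖ = 1 := by
        simpa using mem_sphere_zero_iff_norm.1 θ.2
      rw [norm_smul, hθ, mul_one, Real.norm_eq_abs, abs_of_pos hr0]
    by_cases hlt : r < rho x δ θ
    · have hmem : r • (θ : EuclideanSpace ℝ (Fin m)) ∈ ball (-x) δ := (smul_mem_ball_iff hδ hx θ hr0).2 hlt
      simp only [hsm, hf]
      rw [Set.indicator_of_mem hmem, Set.indicator_of_mem (by exact ⟨hr0, hlt⟩ : r ∈ Ioo 0 (rho x δ θ)), hnr]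
      rw [NNReal.smul_def, Real.coe_toNNReal _ (pow_nonneg hr0.le _), smul_eq_mul]
      ring
    · have hmem : r • (θ : EuclideanSpace ℝ (Fin m)) ∉ ball (-x) δ := fun h => hlt ((smul_mem_ball_iff hδ hx θ hr0).1 h)
      simp only [hsm, hf]
      rw [Set.indicator_of_notMem hmem, Set.indicator_of_notMem (fun h => hlt h.2)]
      simp
  rw [setIntegral_congr_fun measurableSet_Ioi heq,
    setIntegral_indicator measurableSet_Ioo,
    Set.inter_eq_self_of_subset_right Set.Ioo_subset_Ioi_self,
    ← integral_Ioc_eq_integral_Ioo,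
    ← intervalIntegral.integral_of_le (rho_pos hδ hx θ).le]


/-- derivative of `u ↦ (4πu)^(-p)` -/
lemma hasDerivAt_coef (p : ℝ) {s : ℝ} (hs : 0 < s) :
    HasDerivAt (fun u : ℝ => (4 * π * u) ^ (-p)) (-(p / s) * (4 * π * s) ^ (-p)) s := by
  have h4 : (0:ℝ) < 4 * π * s := by positivity
  have h1 : HasDerivAt (fun u : ℝ => 4 * π * u) (4 * π) s := by
    simpa using (hasDerivAt_id s).const_mul (4 * π)
  have h2 := h1.rpow_const (p := -p) (Or.inl h4.ne')
  convert h2 using 1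
  rw [show (-p - 1 : ℝ) = -p - 1 from rfl, Real.rpow_sub h4, Real.rpow_one]
  have hπ : (π : ℝ) ≠ 0 := pi_ne_zero
  field_simp

/-- derivative of `u ↦ exp (-(r^2)/(4u))` -/
lemma hasDerivAt_gauss (r : ℝ) {s : ℝ} (hs : 0 < s) :
    HasDerivAt (fun u : ℝ => Real.exp (-(r ^ 2) / (4 * u)))
      (Real.exp (-(r ^ 2) / (4 * s)) * (r ^ 2 / (4 * s ^ 2))) s := by
  have h1 : HasDerivAt (fun u : ℝ => -(r ^ 2) / (4 * u)) (r ^ 2 / (4 * s ^ 2)) s := by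
    have hfun : (fun u : ℝ => -(r ^ 2) / (4 * u)) = fun u : ℝ => (-(r ^ 2) / 4) * u⁻¹ := by
      funext u
      rw [div_eq_mul_inv, div_eq_mul_inv, mul_inv]
      ring
    rw [hfun]
    have h0 := (hasDerivAt_inv hs.ne').const_mul (-(r ^ 2) / 4)
    refine h0.congr_deriv ?_
    ring
  exact h1.exp

/-- derivative in `u` of the full integrand -/
lemma hasDerivAt_integrand (n : ℕ) (r : ℝ) {u : ℝ} (hu : 0 < u) :
    HasDerivAt (fun u : ℝ =>
        ((4 * π * u) ^ (-((n : ℝ) + 1) / 2) * Real.exp (-(r ^ 2) / (4 * u))) * r ^ n)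
      ((4 * π * u) ^ (-((n : ℝ) + 1) / 2) * Real.exp (-(r ^ 2) / (4 * u))
        * (r ^ 2 / (4 * u ^ 2) - ((n : ℝ) + 1) / (2 * u)) * r ^ n) u := by
  have hc := hasDerivAt_coef (((n : ℝ) + 1) / 2) hu
  have hg := hasDerivAt_gauss r hu
  have h := (hc.mul hg).mul_const (r ^ n)
  rw [show -(((n : ℝ) + 1) / 2) = -((n : ℝ) + 1) / 2 by ring] at h
  refine h.congr_deriv ?_
  ring

/-- antiderivative in `r` for FTC -/
lemma hasDerivAt_anti (n : ℕ) {s : ℝ} (hs : 0 < s) (r : ℝ) :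
    HasDerivAt (fun r : ℝ =>
        -((4 * π * s) ^ (-((n : ℝ) + 1) / 2) * Real.exp (-(r ^ 2) / (4 * s)) * r ^ (n + 1) / (2 * s)))
      ((4 * π * s) ^ (-((n : ℝ) + 1) / 2) * Real.exp (-(r ^ 2) / (4 * s))
        * (r ^ 2 / (4 * s ^ 2) - ((n : ℝ) + 1) / (2 * s)) * r ^ n) r := by
  have hexp : HasDerivAt (fun r : ℝ => Real.exp (-(r ^ 2) / (4 * s)))
      (Real.exp (-(r ^ 2) / (4 * s)) * (-(2 * r) / (4 * s))) r := by
    have h0 : HasDerivAt (fun r : ℝ => -(r ^ 2) / (4 * s)) (-(2 * r) / (4 * s)) r := by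
      have := ((hasDerivAt_pow 2 r).neg).div_const (4 * s)
      simpa using this
    exact h0.exp
  have hpow : HasDerivAt (fun r : ℝ => r ^ (n + 1)) (((n : ℝ) + 1) * r ^ n) r := by
    simpa using hasDerivAt_pow (n + 1) r
  have h := (hexp.mul hpow).const_mul
    (-((4 * π * s) ^ (-((n : ℝ) + 1) / 2) / (2 * s)))
  have hfun : (fun r : ℝ => -((4 * π * s) ^ (-((n : ℝ) + 1) / 2) / (2 * s))
        * (Real.exp (-(r ^ 2) / (4 * s)) * r ^ (n + 1)))
      = fun r : ℝ => -((4 * π * s) ^ (-((n : ℝ) + 1) / 2) * Real.exp (-(r ^ 2) / (4 * s))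
          * r ^ (n + 1) / (2 * s)) := by
    funext r; ring
  simp only [Pi.mul_apply] at h
  rw [hfun] at h
  refine h.congr_deriv ?_
  have hs' : s ≠ 0 := hs.ne'
  field_simp
  ring

lemma hasDerivAt_inner_integral (n : ℕ) {b s : ℝ} (hb : 0 < b) (hs : 0 < s) :
    HasDerivAt (fun u : ℝ => ∫ r in (0:ℝ)..b,
        ((4 * π * u) ^ (-((n : ℝ) + 1) / 2) * Real.exp (-(r ^ 2) / (4 * u))) * r ^ n)
      (-((4 * π * s) ^ (-((n : ℝ) + 1) / 2) * Real.exp (-(b ^ 2) / (4 * s)) * b ^ (n + 1) / (2 * s)))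
      s := by
  set D : ℝ → ℝ → ℝ := fun u r =>
    (4 * π * u) ^ (-((n : ℝ) + 1) / 2) * Real.exp (-(r ^ 2) / (4 * u))
      * (r ^ 2 / (4 * u ^ 2) - ((n : ℝ) + 1) / (2 * u)) * r ^ n with hD
  set K : ℝ := (2 * π * s) ^ (-((n : ℝ) + 1) / 2) * 1
      * (b ^ 2 / (4 * (s / 2) ^ 2) + ((n : ℝ) + 1) / s) * b ^ n with hK
  have hq0 : (-((n : ℝ) + 1) / 2 : ℝ) ≤ 0 := by
    apply div_nonpos_of_nonpos_of_nonneg <;> [skip; norm_num]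
    have : (0:ℝ) ≤ (n : ℝ) := Nat.cast_nonneg n
    linarith
  have key := intervalIntegral.hasDerivAt_integral_of_dominated_loc_of_deriv_le
    (F := fun u r => ((4 * π * u) ^ (-((n : ℝ) + 1) / 2) * Real.exp (-(r ^ 2) / (4 * u))) * r ^ n)
    (F' := D) (x₀ := s) (a := (0:ℝ)) (b := b) (bound := fun _ => K)
    (μ := volume) (Metric.ball_mem_nhds s (half_pos hs))
    ?_ ?_ ?_ ?_ ?_ ?_
  · obtain ⟨-, hkey⟩ := key
    have hftc : (∫ r in (0:ℝ)..b, D s r)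
        = -((4 * π * s) ^ (-((n : ℝ) + 1) / 2) * Real.exp (-(b ^ 2) / (4 * s)) * b ^ (n + 1) / (2 * s)) := by
      rw [intervalIntegral.integral_eq_sub_of_hasDerivAt
        (f := fun r : ℝ => -((4 * π * s) ^ (-((n : ℝ) + 1) / 2) * Real.exp (-(r ^ 2) / (4 * s))
          * r ^ (n + 1) / (2 * s)))
        (fun r _ => hasDerivAt_anti n hs r) ?_]
      · rw [zero_pow (Nat.succ_ne_zero n)]
        ring_nf
      · apply Continuous.intervalIntegrable
        fun_prop
    rw [hftc] at hkey
    exact hkey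
  · refine Filter.Eventually.of_forall fun u => ?_
    exact (Continuous.aestronglyMeasurable (by fun_prop)).restrict
  · apply Continuous.intervalIntegrable
    fun_prop
  · exact (Continuous.aestronglyMeasurable (by fun_prop)).restrict
  · -- bound
    refine Filter.Eventually.of_forall fun r hr u hu => ?_
    rw [uIoc_of_le hb.le] at hr
    obtain ⟨hr0, hrb⟩ := hr
    have hus : s / 2 < u := by
      have h' := mem_ball_iff_norm.1 hu
      rw [Real.norm_eq_abs] at h'
      have := (abs_lt.1 h').1
      linarith
    have hu0 : (0:ℝ) < u := lt_trans (half_pos hs) hus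
    have h1 : (4 * π * u) ^ (-((n : ℝ) + 1) / 2) ≤ (2 * π * s) ^ (-((n : ℝ) + 1) / 2) := by
      apply Real.rpow_le_rpow_of_nonpos (by positivity) (by nlinarith [pi_pos]) hq0
    have h2 : Real.exp (-(r ^ 2) / (4 * u)) ≤ 1 := by
      rw [Real.exp_le_one_iff]
      exact div_nonpos_of_nonpos_of_nonneg (neg_nonpos.2 (sq_nonneg r)) (by positivity)
    have h3 : |r ^ 2 / (4 * u ^ 2) - ((n : ℝ) + 1) / (2 * u)|
        ≤ b ^ 2 / (4 * (s / 2) ^ 2) + ((n : ℝ) + 1) / s := by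
      refine (abs_sub _ _).trans ?_
      have hA : |r ^ 2 / (4 * u ^ 2)| ≤ b ^ 2 / (4 * (s / 2) ^ 2) := by
        rw [abs_of_nonneg (by positivity)]
        apply div_le_div₀ (by positivity) (by nlinarith) (by positivity) (by nlinarith)
      have hB : |((n : ℝ) + 1) / (2 * u)| ≤ ((n : ℝ) + 1) / s := by
        rw [abs_of_nonneg (by positivity)]
        apply div_le_div₀ (by positivity) le_rfl (by positivity) (by nlinarith)
      linarith
    have h4 : r ^ n ≤ b ^ n := pow_le_pow_left₀ hr0.le hrb n
    have hnorm : ‖D u r‖ = (4 * π * u) ^ (-((n : ℝ) + 1) / 2) * Real.exp (-(r ^ 2) / (4 * u))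
        * |r ^ 2 / (4 * u ^ 2) - ((n : ℝ) + 1) / (2 * u)| * r ^ n := by
      rw [hD]
      simp only [Real.norm_eq_abs, abs_mul]
      rw [abs_of_nonneg (by positivity : (0:ℝ) ≤ (4 * π * u) ^ (-((n : ℝ) + 1) / 2)),
        abs_of_nonneg (Real.exp_nonneg _), abs_of_nonneg (by positivity : (0:ℝ) ≤ r ^ n)]
    show ‖D u r‖ ≤ K
    rw [hnorm, hK]
    have c2 : (0:ℝ) ≤ (2 * π * s) ^ (-((n : ℝ) + 1) / 2) := by positivity
    apply mul_le_mul _ h4 (by positivity) (by positivity)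
    apply mul_le_mul _ h3 (abs_nonneg _) (by positivity)
    apply mul_le_mul h1 h2 (Real.exp_nonneg _) c2
  · exact intervalIntegrable_const
  · refine Filter.Eventually.of_forall fun r hr u hu => ?_
    have hus : s / 2 < u := by
      have h' := mem_ball_iff_norm.1 hu
      rw [Real.norm_eq_abs] at h'
      have := (abs_lt.1 h').1
      linarith
    exact hasDerivAt_integrand n r (lt_trans (half_pos hs) hus)


section Main

variable {m : ℕ}

lemma sphere_integrable {h : sphere (0 : EuclideanSpace ℝ (Fin m)) 1 → ℝ}
    (hm : 1 ≤ m) (hc : Continuous h) :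
    Integrable h (volume : Measure (EuclideanSpace ℝ (Fin m))).toSphere := by
  haveI : CompactSpace (sphere (0 : EuclideanSpace ℝ (Fin m)) 1) :=
    isCompact_iff_compactSpace.mp (isCompact_sphere _ _)
  obtain ⟨C, hC⟩ := isCompact_univ.exists_bound_of_continuousOn hc.continuousOn
  exact (integrable_const C).mono' hc.aestronglyMeasurable
    (Filter.Eventually.of_forall fun θ => hC θ trivial)

end Main

end BallHeat

open BallHeat

theorem ball_temperature_deriv_upper_bound (m : ℕ) (hm : 1 ≤ m)
    (δ : ℝ) (hδ : 0 < δ) (x : EuclideanSpace ℝ (Fin m))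
    (hx : x ∈ Metric.ball (0 : EuclideanSpace ℝ (Fin m)) δ) (t : ℝ) (ht : 0 < t) :
    deriv (fun s : ℝ => ∫ y in Metric.ball (0 : EuclideanSpace ℝ (Fin m)) δ,
        (4 * Real.pi * s) ^ (-(m : ℝ) / 2) * Real.exp (-(dist x y) ^ 2 / (4 * s))) t
      ≤ -((m : ℝ) * (volume (Metric.ball (0 : EuclideanSpace ℝ (Fin m)) 1)).toReal * δ ^ m
            / (2 * t * (4 * Real.pi * t) ^ ((m : ℝ) / 2)))
          * Real.exp (-δ ^ 2 / t) := by
  obtain ⟨n, rfl⟩ : ∃ n, m = n + 1 := ⟨m - 1, (Nat.succ_pred_eq_of_pos hm).symm⟩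
  simp only [Nat.cast_add, Nat.cast_one]
  rw [mem_ball_zero_iff] at hx
  have ht4 : (0:ℝ) < 4 * π * t := by
    have := pi_pos; nlinarith
  have hρpos : ∀ θ : sphere (0 : EuclideanSpace ℝ (Fin (n+1))) 1, 0 < rho x δ θ :=
    fun θ => rho_pos hδ hx θ
  have hρle : ∀ θ : sphere (0 : EuclideanSpace ℝ (Fin (n+1))) 1, rho x δ θ ≤ 2 * δ :=
    fun θ => rho_le hδ hx θ
  set σ := (volume : Measure (EuclideanSpace ℝ (Fin (n+1)))).toSphere with hσ
  set I : ℝ → (sphere (0 : EuclideanSpace ℝ (Fin (n+1))) 1) → ℝ := fun s θ =>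
    ∫ r in (0:ℝ)..(rho x δ θ),
      ((4 * π * s) ^ (-((n:ℝ) + 1) / 2) * Real.exp (-(r ^ 2) / (4 * s))) * r ^ n with hI
  set I' : ℝ → (sphere (0 : EuclideanSpace ℝ (Fin (n+1))) 1) → ℝ := fun s θ =>
    -((4 * π * s) ^ (-((n:ℝ) + 1) / 2) * Real.exp (-((rho x δ θ) ^ 2) / (4 * s))
        * (rho x δ θ) ^ (n + 1) / (2 * s)) with hI'
  -- translation + polar representation, for every `s`
  have hrep : ∀ s : ℝ, (∫ y in Metric.ball (0 : EuclideanSpace ℝ (Fin (n+1))) δ,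
      (4 * π * s) ^ (-((n:ℝ) + 1) / 2) * Real.exp (-(dist x y) ^ 2 / (4 * s)))
      = ∫ θ, I s θ ∂σ := by
    intro s
    have hmem : ∀ z : EuclideanSpace ℝ (Fin (n+1)),
        (z + x ∈ ball (0 : EuclideanSpace ℝ (Fin (n+1))) δ ↔ z ∈ ball (-x) δ) := fun z => by
      rw [mem_ball_zero_iff, mem_ball, dist_eq_norm, sub_neg_eq_add]
    have hdist : ∀ z : EuclideanSpace ℝ (Fin (n+1)), dist x (z + x) = ‖z‖ := fun z => by
      rw [dist_eq_norm, show x - (z + x) = -z by abel, norm_neg]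
    have htrans : (∫ y in Metric.ball (0 : EuclideanSpace ℝ (Fin (n+1))) δ,
        (4 * π * s) ^ (-((n:ℝ) + 1) / 2) * Real.exp (-(dist x y) ^ 2 / (4 * s)))
        = ∫ z, Set.indicator (ball (-x) δ)
            (fun z => (fun r : ℝ => (4 * π * s) ^ (-((n:ℝ) + 1) / 2)
              * Real.exp (-(r ^ 2) / (4 * s))) ‖z‖) z := by
      rw [← MeasureTheory.integral_indicator measurableSet_ball,
        ← MeasureTheory.integral_add_right_eq_self (fun y =>
          Set.indicator (ball (0 : EuclideanSpace ℝ (Fin (n+1))) δ)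
            (fun y => (4 * π * s) ^ (-((n:ℝ) + 1) / 2)
              * Real.exp (-(dist x y) ^ 2 / (4 * s))) y) x]
      refine integral_congr_ae (Filter.Eventually.of_forall fun z => ?_)
      by_cases hz : z ∈ ball (-x) δ
      · simp only [Set.indicator_of_mem ((hmem z).2 hz), Set.indicator_of_mem hz, hdist z]
      · simp only [Set.indicator_of_notMem (fun h => hz ((hmem z).1 h)),
          Set.indicator_of_notMem hz]
    rw [htrans]
    have := polar_rep (x := x) (δ := δ) hm hδ hx
      (fun r : ℝ => (4 * π * s) ^ (-((n:ℝ) + 1) / 2) * Real.exp (-(r ^ 2) / (4 * s)))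
      (by fun_prop)
    simpa only [Nat.add_sub_cancel] using this
  -- continuity of the inner integral in θ
  have hIcont : ∀ s : ℝ, Continuous fun θ => I s θ := by
    intro s
    have h1 : Continuous fun b : ℝ => ∫ r in (0:ℝ)..b,
        ((4 * π * s) ^ (-((n:ℝ) + 1) / 2) * Real.exp (-(r ^ 2) / (4 * s))) * r ^ n :=
      intervalIntegral.continuous_primitive
        (fun a b => Continuous.intervalIntegrable (by fun_prop) a b) 0
    exact h1.comp (rho_continuous x δ)
  have hI'cont : Continuous fun θ => I' t θ := by
    have : Continuous fun θ : sphere (0 : EuclideanSpace ℝ (Fin (n+1))) 1 => rho x δ θ :=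
      rho_continuous x δ
    fun_prop
  -- differentiate under the sphere integral
  have key := hasDerivAt_integral_of_dominated_loc_of_deriv_le (μ := σ)
    (F := I) (F' := I') (x₀ := t)
    (bound := fun _ => (2 * π * t) ^ (-((n:ℝ) + 1) / 2) * 1 * (2 * δ) ^ (n + 1) / t)
    (Metric.ball_mem_nhds t (half_pos ht))
    (Filter.Eventually.of_forall fun s => ((hIcont s).aestronglyMeasurable))
    (sphere_integrable hm (hIcont t))
    hI'cont.aestronglyMeasurable
    ?_ (integrable_const _) ?_
  · obtain ⟨hI'int, hderiv⟩ := key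
    have hFeq : (fun s : ℝ => ∫ y in Metric.ball (0 : EuclideanSpace ℝ (Fin (n+1))) δ,
        (4 * π * s) ^ (-((n:ℝ) + 1) / 2) * Real.exp (-(dist x y) ^ 2 / (4 * s)))
        = fun s => ∫ θ, I s θ ∂σ := funext hrep
    rw [hFeq, hderiv.deriv]
    -- compare with the explicit bound
    set ω : ℝ := (volume (Metric.ball (0 : EuclideanSpace ℝ (Fin (n+1))) 1)).toReal with hω
    set c : ℝ := (4 * π * t) ^ (-((n:ℝ) + 1) / 2) with hc
    set e : ℝ := Real.exp (-δ ^ 2 / t) with he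
    have hc0 : 0 ≤ c := Real.rpow_nonneg ht4.le _
    have he0 : 0 < e := Real.exp_pos _
    -- the volume identity
    have hvol : ∫ θ, (rho x δ θ) ^ (n + 1) ∂σ = ((n:ℝ) + 1) * (δ ^ (n + 1) * ω) := by
      have h1 := polar_rep (x := x) (δ := δ) hm hδ hx (fun _ => (1:ℝ)) continuous_const
      simp only [Nat.add_sub_cancel, one_mul] at h1
      have h2 : ∫ z, Set.indicator (ball (-x) δ) (fun z => (1:ℝ)) z
          ∂(volume : Measure (EuclideanSpace ℝ (Fin (n+1))))
          = (volume (ball (-x) δ)).toReal := by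
        rw [MeasureTheory.integral_indicator measurableSet_ball]
        simp
        rfl
      have h3 : ∀ θ : sphere (0 : EuclideanSpace ℝ (Fin (n+1))) 1,
          (∫ r in (0:ℝ)..(rho x δ θ), r ^ n) = (rho x δ θ) ^ (n + 1) / ((n:ℝ) + 1) := by
        intro θ
        rw [integral_pow]
        simp [zero_pow (Nat.succ_ne_zero n)]
      rw [h2] at h1
      simp only [h3] at h1
      rw [MeasureTheory.integral_div] at h1
      have hball : (volume (ball (-x) δ)).toReal = δ ^ (n + 1) * ω := by
        rw [Measure.addHaar_ball _ _ hδ.le, ENNReal.toReal_mul,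
          ENNReal.toReal_ofReal (by positivity), finrank_euclideanSpace_fin, hω]
      rw [hball] at h1
      have hn1 : ((n:ℝ) + 1) ≠ 0 := by positivity
      rw [eq_div_iff hn1] at h1
      rw [← h1]
      ring
    -- pointwise bound on I' t
    have hpt : ∀ θ, I' t θ ≤ (-(c * e / (2 * t))) * (rho x δ θ) ^ (n + 1) := by
      intro θ
      have hE : e ≤ Real.exp (-((rho x δ θ) ^ 2) / (4 * t)) := by
        rw [he, Real.exp_le_exp, div_le_div_iff₀ ht (by linarith)]
        have hsq : (rho x δ θ) ^ 2 ≤ 4 * δ ^ 2 := by nlinarith [hρle θ, hρpos θ]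
        nlinarith [mul_le_mul_of_nonneg_right hsq ht.le]
      have hinv : (0:ℝ) < (2 * t)⁻¹ := by
        rw [inv_pos]; linarith
      have hρpow : (0:ℝ) ≤ (rho x δ θ) ^ (n + 1) := pow_nonneg (hρpos θ).le _
      simp only [hI']
      have expand : ∀ A : ℝ, -(c * A * (rho x δ θ) ^ (n + 1) / (2 * t))
          = (-(c * A / (2 * t))) * (rho x δ θ) ^ (n + 1) := by intro A; ring
      rw [expand]
      apply mul_le_mul_of_nonneg_right _ hρpow
      rw [neg_le_neg_iff]
      rw [div_le_div_iff₀ (by linarith) (by linarith)]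
      nlinarith [mul_le_mul_of_nonneg_left hE hc0]
    have hmono : ∫ θ, I' t θ ∂σ
        ≤ ∫ θ, (-(c * e / (2 * t))) * (rho x δ θ) ^ (n + 1) ∂σ := by
      refine integral_mono hI'int ?_ hpt
      exact sphere_integrable hm (by have := rho_continuous x δ; fun_prop)
    refine hmono.trans ?_
    rw [MeasureTheory.integral_const_mul, hvol]
    -- final arithmetic
    have hP : c = ((4 * π * t) ^ (((n:ℝ) + 1) / 2))⁻¹ := by
      rw [hc, neg_div, Real.rpow_neg ht4.le]
    have hPpos : (0:ℝ) < (4 * π * t) ^ (((n:ℝ) + 1) / 2) := Real.rpow_pos_of_pos ht4 _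
    rw [hP]
    apply le_of_eq
    have h2t : (2:ℝ) * t ≠ 0 := by
      have : (0:ℝ) < 2 * t := by linarith
      exact this.ne'
    field_simp
  · -- bound on I'
    refine Filter.Eventually.of_forall fun θ s' hs' => ?_
    have hus : t / 2 < s' := by
      have h' := mem_ball_iff_norm.1 hs'
      rw [Real.norm_eq_abs] at h'
      have := (abs_lt.1 h').1
      linarith
    have hs'0 : (0:ℝ) < s' := lt_trans (half_pos ht) hus
    have h4s : (0:ℝ) < 4 * π * s' := by have := pi_pos; nlinarith
    have h2t : (0:ℝ) < 2 * π * t := by have := pi_pos; nlinarith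
    have hval : ‖I' s' θ‖ = (4 * π * s') ^ (-((n:ℝ) + 1) / 2)
        * Real.exp (-((rho x δ θ) ^ 2) / (4 * s')) * (rho x δ θ) ^ (n + 1) / (2 * s') := by
      simp only [hI']
      rw [Real.norm_eq_abs, abs_neg, abs_of_nonneg]
      apply div_nonneg _ (by linarith)
      exact mul_nonneg (mul_nonneg (Real.rpow_nonneg h4s.le _) (Real.exp_nonneg _))
        (pow_nonneg (hρpos θ).le _)
    rw [hval]
    have h1 : (4 * π * s') ^ (-((n:ℝ) + 1) / 2) ≤ (2 * π * t) ^ (-((n:ℝ) + 1) / 2) := by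
      apply Real.rpow_le_rpow_of_nonpos h2t (by nlinarith [pi_pos])
      apply div_nonpos_of_nonpos_of_nonneg _ (by norm_num)
      have : (0:ℝ) ≤ (n:ℝ) := Nat.cast_nonneg n
      linarith
    have h2 : Real.exp (-((rho x δ θ) ^ 2) / (4 * s')) ≤ 1 := by
      rw [Real.exp_le_one_iff]
      exact div_nonpos_of_nonpos_of_nonneg (neg_nonpos.2 (sq_nonneg _)) (by linarith)
    have h3 : (rho x δ θ) ^ (n + 1) ≤ (2 * δ) ^ (n + 1) :=
      pow_le_pow_left₀ (hρpos θ).le (hρle θ) _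
    apply div_le_div₀ _ _ ht (by linarith)
    · positivity
    · apply mul_le_mul _ h3 (pow_nonneg (hρpos θ).le _) (by positivity)
      apply mul_le_mul h1 h2 (Real.exp_nonneg _) (Real.rpow_nonneg h2t.le _)
  · -- differentiability
    refine Filter.Eventually.of_forall fun θ s' hs' => ?_
    have hus : t / 2 < s' := by
      have h' := mem_ball_iff_norm.1 hs'
      rw [Real.norm_eq_abs] at h'
      have := (abs_lt.1 h').1
      linarith
    have hs'0 : (0:ℝ) < s' := lt_trans (half_pos ht) hus
    simp only [hI, hI']
    exact hasDerivAt_inner_integral n (hρpos θ) hs'0
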